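/- Let X be a finitely ramified fractal and k ∈ ℕ such that, for every n, every n-cell of X contains at least two disjoint (n+k)-cells and no two disjoint n-cells of X both intersect a common (n+k)-cell. Let α be a real number with 1 < α ≤ (3/2)^{1/k}, and let d_α be the metric defined by d_α(p,q) = inf { Σ_{i=1}^{l} α^{−|E_i|} : E_1,…,E_l is a cell chain connecting p and q }. Then every n-cell E of X satisfies α^{1−n−2k} ≤ diam_{d_α}(E) ≤ α^{−n}. -/

import Mathlib

open Set

/-- A finitely ramified cell structure on a topological space `X`: a locally finite,
level-indexed family of "cells", where each cell is compact, connected, with nonempty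
interior, the unique `0`-cell is all of `X`, every `(n+1)`-cell lies in some `n`-cell,
each `n`-cell is the union of the `(n+1)`-cells it contains, two distinct cells of the
same level meet in a finite set, and every infinite descending chain of cells
intersects in a single point. -/
structure CellStructure (X : Type*) [TopologicalSpace X] where
  cells : ℕ → Set (Set X)
  finite_cells : ∀ n, (cells n).Finite
  isCompact_cells : ∀ n, ∀ E ∈ cells n, IsCompact E
  isConnected_cells : ∀ n, ∀ E ∈ cells n, IsConnected E
  interior_nonempty : ∀ n, ∀ E ∈ cells n, (interior E).Nonempty
  root : cells 0 = {Set.univ}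
  exists_parent : ∀ n, ∀ E' ∈ cells (n + 1), ∃ E ∈ cells n, E' ⊆ E
  eq_sUnion_children : ∀ n, ∀ E ∈ cells n, E = ⋃₀ {E' | E' ∈ cells (n + 1) ∧ E' ⊆ E}
  inter_finite : ∀ n, ∀ E₁ ∈ cells n, ∀ E₂ ∈ cells n, E₁ ≠ E₂ → (E₁ ∩ E₂).Finite
  descending_singleton : ∀ E : ℕ → Set X, (∀ n, E n ∈ cells n) → (∀ n, E (n + 1) ⊆ E n) →
    ∃ p : X, (⋂ n, E n) = {p}

/-- `d` is a metric (distance function) on the set `X`. -/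
def IsMetricOn {X : Type*} (d : X → X → ℝ) : Prop :=
  (∀ x y, 0 ≤ d x y) ∧ (∀ x y, d x y = 0 ↔ x = y) ∧ (∀ x y, d x y = d y x) ∧
    ∀ x y z, d x z ≤ d x y + d y z

/-- The distance function `d` induces the given topology on `X`. -/
def InducesTopology {X : Type*} [TopologicalSpace X] (d : X → X → ℝ) : Prop :=
  ∀ s : Set X, IsOpen s ↔ ∀ x ∈ s, ∃ ε > 0, ∀ y, d x y < ε → y ∈ s

/-- The diameter of a set with respect to a distance function. -/
noncomputable def sdiam {X : Type*} (d : X → X → ℝ) (S : Set X) : ℝ :=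
  sSup (Set.image2 d S S)

/-- The distance between two sets with respect to a distance function. -/
noncomputable def sdist {X : Type*} (d : X → X → ℝ) (S T : Set X) : ℝ :=
  sInf (Set.image2 d S T)

/-- The distance function `d` is `(r,R,C,δ)`-undistorted with respect to the family
of cells `cells`: exponential decay of diameter ratios of intersecting cells, and
cell separation for disjoint cells of the same level. -/
def IsUndistortedWith {X : Type*} (cells : ℕ → Set (Set X)) (d : X → X → ℝ)
    (r R C δ : ℝ) : Prop :=
  0 < r ∧ r ≤ R ∧ R < 1 ∧ 1 ≤ C ∧ 0 < δ ∧
    (∀ m n : ℕ, m ≤ n → ∀ E ∈ cells m, ∀ E' ∈ cells n, (E ∩ E').Nonempty →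
      r ^ (n - m) / C ≤ sdiam d E' / sdiam d E ∧
        sdiam d E' / sdiam d E ≤ C * R ^ (n - m)) ∧
    ∀ n : ℕ, ∀ E₁ ∈ cells n, ∀ E₂ ∈ cells n, Disjoint E₁ E₂ →
      δ * sdiam d E₁ ≤ sdist d E₁ E₂

/-- `d` is undistorted if it is `(r,R,C,δ)`-undistorted for some constants. -/
def IsUndistorted {X : Type*} (cells : ℕ → Set (Set X)) (d : X → X → ℝ) : Prop :=
  ∃ r R C δ : ℝ, IsUndistortedWith cells d r R C δ

/-- `η` is a homeomorphism of `[0,∞)` onto itself (equivalently: a continuous,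
strictly increasing surjection of `[0,∞)` onto `[0,∞)` fixing `0`). -/
def IsQSGauge (η : ℝ → ℝ) : Prop :=
  ContinuousOn η (Set.Ici 0) ∧ StrictMonoOn η (Set.Ici 0) ∧ η 0 = 0 ∧
    Set.MapsTo η (Set.Ici 0) (Set.Ici 0) ∧ Set.SurjOn η (Set.Ici 0) (Set.Ici 0)

/-- The `η`-quasisymmetry inequality for a map `f` between sets carrying
distance functions `dX` and `dY`. -/
def QSIneq {X Y : Type*} (dX : X → X → ℝ) (dY : Y → Y → ℝ) (f : X → Y) (η : ℝ → ℝ) : Prop :=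
  ∀ a b c : X, a ≠ b → a ≠ c → b ≠ c →
    dY (f a) (f b) / dY (f a) (f c) ≤ η (dX a b / dX a c)


/-- The weight `Σ α^{-|E_i|}` of a chain of cells, each recorded with its level. -/
noncomputable def chainWeight {X : Type*} (α : ℝ) (c : List (ℕ × Set X)) : ℝ :=
  (c.map fun e => α ^ (-(e.1 : ℤ))).sum

/-- `c` is a cell chain connecting `p` to `q`: a nonempty finite sequence of cells
(recorded with their levels) with `p` in the first cell, `q` in the last one, and
consecutive cells intersecting. -/
def IsCellChain {X : Type*} [TopologicalSpace X] (CS : CellStructure X) (p q : X)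
    (c : List (ℕ × Set X)) : Prop :=
  c ≠ [] ∧ (∀ e ∈ c, e.2 ∈ CS.cells e.1) ∧
    (∃ e, c.head? = some e ∧ p ∈ e.2) ∧ (∃ e, c.getLast? = some e ∧ q ∈ e.2) ∧
    List.Chain' (fun e f => (e.2 ∩ f.2).Nonempty) c

/-- The distance function `d_α(p,q) = inf { Σ α^{-|E_i|} }` over all cell chains
connecting `p` and `q`. -/
noncomputable def dAlpha {X : Type*} [TopologicalSpace X] (CS : CellStructure X)
    (α : ℝ) (p q : X) : ℝ :=
  sInf {s : ℝ | ∃ c : List (ℕ × Set X), IsCellChain CS p q c ∧ chainWeight α c = s}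

/-- No intersecting pair of `n`-cells contains `p` and `q` respectively. -/
def NoPairAt {X : Type*} [TopologicalSpace X] (CS : CellStructure X) (p q : X)
    (n : ℕ) : Prop :=
  ∀ Ex ∈ CS.cells n, ∀ Ey ∈ CS.cells n, p ∈ Ex → q ∈ Ey → ¬(Ex ∩ Ey).Nonempty

section Aux

variable {X : Type*} [TopologicalSpace X] (CS : CellStructure X)

lemma exists_ancestor : ∀ n : ℕ, ∀ E ∈ CS.cells n, ∀ m : ℕ, m ≤ n → ∃ A ∈ CS.cells m, E ⊆ A := by
  intro n
  induction n with
  | zero =>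
    intro E hE m hm
    exact ⟨E, by simpa [Nat.le_zero.mp hm] using hE, subset_rfl⟩
  | succ n ih =>
    intro E hE m hm
    rcases Nat.lt_or_ge m (n + 1) with h | h
    · obtain ⟨A, hA, hEA⟩ := CS.exists_parent n E hE
      obtain ⟨B, hB, hAB⟩ := ih A hA m (Nat.lt_succ_iff.mp h)
      exact ⟨B, hB, hEA.trans hAB⟩
    · exact ⟨E, by rwa [Nat.le_antisymm hm h], subset_rfl⟩

lemma exists_descendant {m m' : ℕ} (h : m ≤ m') :
    ∀ G ∈ CS.cells m, ∀ y ∈ G, ∃ F ∈ CS.cells m', y ∈ F ∧ F ⊆ G := by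
  induction h with
  | refl => exact fun G hG y hy => ⟨G, hG, hy, subset_rfl⟩
  | @step j hj ih =>
    intro G hG y hy
    obtain ⟨F, hF, hyF, hFG⟩ := ih G hG y hy
    have := CS.eq_sUnion_children j F hF
    rw [this] at hyF
    obtain ⟨F', ⟨hF', hF'F⟩, hyF'⟩ := hyF
    exact ⟨F', hF', hyF', hF'F.trans hFG⟩

lemma chainWeight_nonneg {α : ℝ} (hα : 0 < α) (c : List (ℕ × Set X)) : 0 ≤ chainWeight α c := by
  apply List.sum_nonneg
  intro x hx
  obtain ⟨e, _, rfl⟩ := List.mem_map.mp hx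
  exact (zpow_pos hα _).le

lemma chainWeight_append (α : ℝ) (c₁ c₂ : List (ℕ × Set X)) :
    chainWeight α (c₁ ++ c₂) = chainWeight α c₁ + chainWeight α c₂ := by
  simp [chainWeight]

lemma le_chainWeight {α : ℝ} (hα : 0 < α) {c : List (ℕ × Set X)} {e : ℕ × Set X} (he : e ∈ c) :
    α ^ (-(e.1 : ℤ)) ≤ chainWeight α c := by
  apply List.single_le_sum _ _ (List.mem_map_of_mem (f := fun e : ℕ × Set X => α ^ (-(e.1 : ℤ))) he)
  intro x hx
  obtain ⟨f, _, rfl⟩ := List.mem_map.mp hx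
  exact (zpow_pos hα _).le

end Aux

section Sep
variable {X : Type*} [TopologicalSpace X] (CS : CellStructure X) (k : ℕ)
variable (hk₂ : ∀ n : ℕ, ∀ E₁ ∈ CS.cells n, ∀ E₂ ∈ CS.cells n, Disjoint E₁ E₂ →
      ∀ F ∈ CS.cells (n + k), ¬((E₁ ∩ F).Nonempty ∧ (E₂ ∩ F).Nonempty))

include hk₂ in
lemma sep_aux {μP μQ : ℕ} (h : μP ≤ μQ) {P Q H : Set X}
    (hP : P ∈ CS.cells μP) (hQ : Q ∈ CS.cells μQ) (hPQ : P ∩ Q = ∅)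
    (hH : H ∈ CS.cells (μQ + k)) (h1 : (H ∩ P).Nonempty) (h2 : (H ∩ Q).Nonempty) : False := by
  obtain ⟨y, hyH, hyP⟩ := h1
  obtain ⟨P', hP', hyP', hP'P⟩ := exists_descendant CS h P hP y hyP
  have hdisj : Disjoint P' Q := by
    rw [Set.disjoint_iff_inter_eq_empty]
    apply Set.eq_empty_of_subset_empty
    rw [← hPQ]
    exact Set.inter_subset_inter_left _ hP'P
  exact hk₂ μQ P' hP' Q hQ hdisj H hH ⟨⟨y, hyP', hyH⟩, by rwa [Set.inter_comm] at h2⟩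

include hk₂ in
lemma sep {μP μQ : ℕ} {P Q H : Set X}
    (hP : P ∈ CS.cells μP) (hQ : Q ∈ CS.cells μQ) (hPQ : P ∩ Q = ∅)
    (hH : H ∈ CS.cells (max μP μQ + k)) (h1 : (H ∩ P).Nonempty) (h2 : (H ∩ Q).Nonempty) :
    False := by
  rcases le_total μP μQ with h | h
  · exact sep_aux CS k hk₂ h hP hQ hPQ (by rwa [max_eq_right h] at hH) h1 h2
  · exact sep_aux CS k hk₂ h hQ hP (by rw [Set.inter_comm]; exact hPQ)
      (by rwa [max_eq_left h] at hH) h2 h1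

end Sep

section Key
variable {X : Type*} [TopologicalSpace X] (CS : CellStructure X) (k : ℕ)
variable (hk₂ : ∀ n : ℕ, ∀ E₁ ∈ CS.cells n, ∀ E₂ ∈ CS.cells n, Disjoint E₁ E₂ →
      ∀ F ∈ CS.cells (n + k), ¬((E₁ ∩ F).Nonempty ∧ (E₂ ∩ F).Nonempty))

include hk₂ in
lemma keyU (α : ℝ) (hα : 1 < α) (hαk : α ^ k ≤ 2) :
    ∀ N : ℕ, ∀ L : List (ℕ × Set X), L.length ≤ N →
    ∀ μP μQ : ℕ, ∀ P ∈ CS.cells μP, ∀ Q ∈ CS.cells μQ, P ∩ Q = ∅ →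
    ∀ p q : X, p ∈ P → q ∈ Q → IsCellChain CS p q L →
    α ^ (1 - (k : ℤ) - ((max μP μQ : ℕ) : ℤ)) ≤ chainWeight α L := by
  classical
  have hα0 : (0 : ℝ) < α := lt_trans one_pos hα
  intro N
  induction N with
  | zero =>
    intro L hc μP μQ P hP Q hQ hPQ p q hp hq hchain
    exact absurd (List.length_eq_zero_iff.mp (Nat.le_zero.mp hc)) hchain.1
  | succ N ih =>
    intro L hlen μP μQ P hP Q hQ hPQ p q hp hq hchain
    obtain ⟨hne, hmem, ⟨e₀, he₀, hpe₀⟩, ⟨e₁, he₁, hqe₁⟩, hch⟩ := hchain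
    set M := max μP μQ with hM
    by_cases hA : ∃ e ∈ L, e.1 < M + k
    · obtain ⟨e, hec, helt⟩ := hA
      have h1 : α ^ (1 - (k : ℤ) - (M : ℤ)) ≤ α ^ (-(e.1 : ℤ)) := by
        apply zpow_le_zpow_right₀ hα.le; omega
      exact h1.trans (le_chainWeight hα0 hec)
    · push_neg at hA
      have hlpos : 0 < L.length := List.length_pos_iff.mpr hne
      -- ancestors at level M + k
      have anc : ∀ i (hi : i < L.length), ∃ A, A ∈ CS.cells (M + k) ∧ (L[i]'hi).2 ⊆ A := by
        intro i hi
        have hmem' : L[i]'hi ∈ L := List.getElem_mem hi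
        obtain ⟨A, hA, hsub⟩ := exists_ancestor CS (L[i]'hi).1 (L[i]'hi).2 (hmem _ hmem')
          (M + k) (hA _ hmem')
        exact ⟨A, hA, hsub⟩
      let H : ℕ → Set X := fun i => if hi : i < L.length then (anc i hi).choose else ∅
      have Hcell : ∀ i (hi : i < L.length), H i ∈ CS.cells (M + k) := by
        intro i hi; simp only [H, dif_pos hi]; exact (anc i hi).choose_spec.1
      have Hsub : ∀ i (hi : i < L.length), (L[i]'hi).2 ⊆ H i := by
        intro i hi; simp only [H, dif_pos hi]; exact (anc i hi).choose_spec.2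
      -- identify endpoints
      have he₀' : e₀ = L[0]'hlpos := by
        have h : L.head? = L[0]? := List.head?_eq_getElem?
        rw [he₀, List.getElem?_eq_getElem hlpos] at h
        exact Option.some_injective _ h
      have hl1 : L.length - 1 < L.length := Nat.sub_lt hlpos one_pos
      have he₁' : e₁ = L[L.length - 1]'hl1 := by
        have h : L.getLast? = L[L.length - 1]? := List.getLast?_eq_getElem?
        rw [he₁, List.getElem?_eq_getElem hl1] at h
        exact Option.some_injective _ h
      have hp0 : p ∈ H 0 := Hsub 0 hlpos (he₀' ▸ hpe₀)
      have hqlast : q ∈ H (L.length - 1) := Hsub _ hl1 (he₁' ▸ hqe₁)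
      -- the first index whose ancestor misses P
      have hPex : ∃ i, ∃ _ : i < L.length, H i ∩ P = ∅ := by
        refine ⟨L.length - 1, hl1, ?_⟩
        by_contra hne'
        rw [← Ne, ← Set.nonempty_iff_ne_empty] at hne'
        exact sep CS k hk₂ hP hQ hPQ (Hcell _ hl1) hne' ⟨q, hqlast, hq⟩
      let j := Nat.find hPex
      obtain ⟨hjlt, hjempty⟩ : ∃ _ : j < L.length, H j ∩ P = ∅ := Nat.find_spec hPex
      have hj0 : j ≠ 0 := by
        intro h0
        rw [h0] at hjempty
        exact absurd hjempty (Set.Nonempty.ne_empty ⟨p, hp0, hp⟩)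
      have hj1lt : j - 1 < L.length := lt_trans (Nat.sub_lt (Nat.pos_of_ne_zero hj0) one_pos) hjlt
      have hjm : ¬ ∃ _ : j - 1 < L.length, H (j - 1) ∩ P = ∅ :=
        Nat.find_min hPex (Nat.sub_lt (Nat.pos_of_ne_zero hj0) one_pos)
      have hjm1ne : (H (j - 1) ∩ P).Nonempty := by
        rw [Set.nonempty_iff_ne_empty]
        intro hemp
        exact hjm ⟨hj1lt, hemp⟩
      have hjm1Q : H (j - 1) ∩ Q = ∅ := by
        by_contra h
        rw [← Ne, ← Set.nonempty_iff_ne_empty] at h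
        exact sep CS k hk₂ hP hQ hPQ (Hcell _ hj1lt) hjm1ne h
      -- split the chain at j
      have hjle : j ≤ L.length := hjlt.le
      have hlen₁ : (L.take j).length = j := by rw [List.length_take]; omega
      have hch' : List.Chain' (fun e f => (e.2 ∩ f.2).Nonempty) (L.take j ++ L.drop j) := by
        rw [List.take_append_drop]; exact hch
      obtain ⟨hch₁, hch₂, hlink⟩ := List.isChain_append.mp hch'
      have hlast₁ : (L.take j).getLast? = some (L[j - 1]'hj1lt) := by
        rw [List.getLast?_eq_getElem?, hlen₁, List.getElem?_take, if_pos (by omega : j - 1 < j),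
          List.getElem?_eq_getElem hj1lt]
      have hhead₂ : (L.drop j).head? = some (L[j]'hjlt) := by
        rw [List.head?_drop, List.getElem?_eq_getElem hjlt]
      have hR := hlink _ (Option.mem_def.mpr hlast₁) _ (Option.mem_def.mpr hhead₂)
      obtain ⟨x', hx1, hx2⟩ := hR
      have hx'H1 : x' ∈ H (j - 1) := Hsub _ hj1lt hx1
      have hx'H2 : x' ∈ H j := Hsub _ hjlt hx2
      -- the two subchains
      have hchain₁ : IsCellChain CS p x' (L.take j) := by
        refine ⟨?_, ?_, ⟨e₀, ?_, hpe₀⟩, ⟨_, hlast₁, hx1⟩, hch₁⟩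
        · apply List.ne_nil_of_length_pos; omega
        · intro e he; exact hmem e ((List.take_sublist j L).subset he)
        · rw [List.head?_eq_getElem?, List.getElem?_take,
            if_pos (Nat.pos_of_ne_zero hj0), ← List.head?_eq_getElem?, he₀]
      have hchain₂ : IsCellChain CS x' q (L.drop j) := by
        refine ⟨?_, ?_, ⟨_, hhead₂, hx2⟩, ⟨e₁, ?_, hqe₁⟩, hch₂⟩
        · apply List.ne_nil_of_length_pos; rw [List.length_drop]; omega
        · intro e he; exact hmem e ((List.drop_sublist j L).subset he)
        · rw [List.getLast?_eq_getElem?, List.length_drop, List.getElem?_drop,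
            (by omega : j + (L.length - j - 1) = L.length - 1), ← List.getLast?_eq_getElem?, he₁]
      -- recursive calls
      have hmax1 : max μP (M + k) = M + k := max_eq_right (le_trans (le_max_left _ _) (Nat.le_add_right _ _))
      have hmax2 : max (M + k) μQ = M + k := max_eq_left (le_trans (le_max_right _ _) (Nat.le_add_right _ _))
      have call1 : α ^ (1 - (k : ℤ) - ((M + k : ℕ) : ℤ)) ≤ chainWeight α (L.take j) := by
        have := ih (L.take j) (by omega) μP (M + k) P hP (H j) (Hcell _ hjlt)
          (by rw [Set.inter_comm]; exact hjempty) p x' hp hx'H2 hchain₁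
        rwa [hmax1] at this
      have call2 : α ^ (1 - (k : ℤ) - ((M + k : ℕ) : ℤ)) ≤ chainWeight α (L.drop j) := by
        have := ih (L.drop j) (by rw [List.length_drop]; omega) (M + k) μQ (H (j - 1))
          (Hcell _ hj1lt) Q hQ hjm1Q x' q hx'H1 hq hchain₂
        rwa [hmax2] at this
      have hsum : chainWeight α L = chainWeight α (L.take j) + chainWeight α (L.drop j) := by
        rw [← chainWeight_append, List.take_append_drop]
      rw [hsum]
      have hb : α ^ (1 - (k : ℤ) - (M : ℤ)) ≤
          α ^ (1 - (k : ℤ) - ((M + k : ℕ) : ℤ)) + α ^ (1 - (k : ℤ) - ((M + k : ℕ) : ℤ)) := by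
        have h2 : α ^ (1 - (k : ℤ) - (M : ℤ)) = α ^ (k : ℤ) * α ^ (1 - (k : ℤ) - ((M + k : ℕ) : ℤ)) := by
          rw [← zpow_add₀ (ne_of_gt hα0)]
          congr 1
          push_cast
          ring
        rw [h2, ← two_mul]
        apply mul_le_mul_of_nonneg_right _ (zpow_pos hα0 _).le
        rw [zpow_natCast]
        exact hαk
      exact hb.trans (add_le_add call1 call2)

end Key

section DA
variable {X : Type*} [TopologicalSpace X] (CS : CellStructure X) {α : ℝ}

lemma isCellChain_singleton {n : ℕ} {E : Set X} (hE : E ∈ CS.cells n) {p q : X}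
    (hp : p ∈ E) (hq : q ∈ E) : IsCellChain CS p q [(n, E)] := by
  refine ⟨by simp, ?_, ⟨(n, E), rfl, hp⟩, ⟨(n, E), rfl, hq⟩, List.isChain_singleton _⟩
  intro e he
  rw [List.mem_singleton] at he
  rw [he]
  exact hE

lemma chainWeight_singleton (α : ℝ) (n : ℕ) (E : Set X) :
    chainWeight α [(n, E)] = α ^ (-(n : ℤ)) := by
  simp [chainWeight]

lemma dAlpha_bddBelow (hα : 0 < α) (p q : X) :
    BddBelow {s : ℝ | ∃ c : List (ℕ × Set X), IsCellChain CS p q c ∧ chainWeight α c = s} := by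
  refine ⟨0, ?_⟩
  rintro s ⟨c, _, rfl⟩
  exact chainWeight_nonneg hα c

lemma dAlpha_le_of_mem (hα : 0 < α) {n : ℕ} {E : Set X} (hE : E ∈ CS.cells n) {p q : X}
    (hp : p ∈ E) (hq : q ∈ E) : dAlpha CS α p q ≤ α ^ (-(n : ℤ)) :=
  csInf_le (dAlpha_bddBelow CS hα p q)
    ⟨[(n, E)], isCellChain_singleton CS hE hp hq, chainWeight_singleton α n E⟩

lemma dAlpha_le_one (hα : 0 < α) (p q : X) : dAlpha CS α p q ≤ 1 := by
  have huniv : (Set.univ : Set X) ∈ CS.cells 0 := by rw [CS.root]; rfl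
  have := dAlpha_le_of_mem CS hα huniv (Set.mem_univ p) (Set.mem_univ q)
  simpa using this

lemma dAlpha_setNonempty (p q : X) :
    {s : ℝ | ∃ c : List (ℕ × Set X), IsCellChain CS p q c ∧ chainWeight α c = s}.Nonempty := by
  have huniv : (Set.univ : Set X) ∈ CS.cells 0 := by rw [CS.root]; rfl
  exact ⟨_, [(0, Set.univ)], isCellChain_singleton CS huniv (Set.mem_univ p) (Set.mem_univ q), rfl⟩

end DA

/-- Under the combinatorial hypotheses of Theorem 1.8 with constant
`k`, and `1 < α ≤ (3/2)^{1/k}`, every `n`-cell `E` satisfies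
`α^{1-n-2k} ≤ diam_{d_α}(E) ≤ α^{-n}`. -/
theorem stmt8 {X : Type*} [TopologicalSpace X] [CompactSpace X] [ConnectedSpace X]
    [TopologicalSpace.MetrizableSpace X] (CS : CellStructure X) (k : ℕ)
    (hk₁ : ∀ n : ℕ, ∀ E ∈ CS.cells n, ∃ E₁ ∈ CS.cells (n + k), ∃ E₂ ∈ CS.cells (n + k),
      E₁ ⊆ E ∧ E₂ ⊆ E ∧ E₁ ≠ E₂ ∧ Disjoint E₁ E₂)
    (hk₂ : ∀ n : ℕ, ∀ E₁ ∈ CS.cells n, ∀ E₂ ∈ CS.cells n, Disjoint E₁ E₂ →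
      ∀ F ∈ CS.cells (n + k), ¬((E₁ ∩ F).Nonempty ∧ (E₂ ∩ F).Nonempty))
    (α : ℝ) (hα₁ : 1 < α) (hα₂ : α ≤ (3 / 2 : ℝ) ^ ((k : ℝ))⁻¹) :
    ∀ n : ℕ, ∀ E ∈ CS.cells n,
      α ^ (1 - (n : ℤ) - 2 * (k : ℤ)) ≤ sdiam (dAlpha CS α) E ∧
        sdiam (dAlpha CS α) E ≤ α ^ (-(n : ℤ)) := by
  have hα0 : (0 : ℝ) < α := lt_trans one_pos hα₁
  have hk0 : k ≠ 0 := by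
    intro h
    subst h
    norm_num at hα₂
    linarith
  have hαk : α ^ k ≤ 2 := by
    have h1 : α ^ k ≤ ((3 / 2 : ℝ) ^ ((k : ℝ))⁻¹) ^ k := pow_le_pow_left₀ hα0.le hα₂ k
    have h2 : ((3 / 2 : ℝ) ^ ((k : ℝ))⁻¹) ^ k = (3 / 2 : ℝ) := by
      rw [← Real.rpow_natCast ((3 / 2 : ℝ) ^ ((k : ℝ))⁻¹) k, ← Real.rpow_mul (by norm_num),
        inv_mul_cancel₀ (Nat.cast_ne_zero.mpr hk0), Real.rpow_one]
    rw [h2] at h1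
    linarith
  intro n E hE
  have hEne : E.Nonempty := (CS.interior_nonempty n E hE).mono interior_subset
  have hBdd : BddAbove (Set.image2 (dAlpha CS α) E E) := by
    refine ⟨1, ?_⟩
    rintro s ⟨p, hp, q, hq, rfl⟩
    exact dAlpha_le_one CS hα0 p q
  constructor
  · obtain ⟨E₁, hE₁, E₂, hE₂, hE₁E, hE₂E, hne12, hdisj⟩ := hk₁ n E hE
    obtain ⟨p, hp⟩ : E₁.Nonempty := (CS.interior_nonempty _ E₁ hE₁).mono interior_subset
    obtain ⟨q, hq⟩ : E₂.Nonempty := (CS.interior_nonempty _ E₂ hE₂).mono interior_subset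
    have hd : α ^ (1 - (n : ℤ) - 2 * (k : ℤ)) ≤ dAlpha CS α p q := by
      apply le_csInf (dAlpha_setNonempty CS p q)
      rintro s ⟨c, hcchain, rfl⟩
      have hkey := keyU CS k hk₂ α hα₁ hαk c.length c le_rfl (n + k) (n + k) E₁ hE₁ E₂ hE₂
        (Set.disjoint_iff_inter_eq_empty.mp hdisj) p q hp hq hcchain
      have : α ^ (1 - (n : ℤ) - 2 * (k : ℤ)) = α ^ (1 - (k : ℤ) - ((max (n + k) (n + k) : ℕ) : ℤ)) := by
        rw [max_self]
        congr 1
        push_cast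
        ring
      rw [this]
      exact hkey
    have hle : dAlpha CS α p q ≤ sdiam (dAlpha CS α) E :=
      le_csSup hBdd (Set.mem_image2_of_mem (hE₁E hp) (hE₂E hq))
    exact hd.trans hle
  · apply csSup_le
    · obtain ⟨p, hp⟩ := hEne
      exact ⟨_, Set.mem_image2_of_mem hp hp⟩
    · rintro s ⟨p, hp, q, hq, rfl⟩
      exact dAlpha_le_of_mem CS hα0 hE hp hq
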